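/- Let D be a chain BN on {0,1}^n and let f be a conjunction with literal set T = T0 ∪ T1. For any subset S ⊆ [n] with max S > max T, the Fourier coefficient f̂_S equals 0. -/
import Mathlib


/-!
A chain BN on `{0,1}^n` is a Bayesian network whose DAG is the directed path
`1 → 2 → ⋯ → n` (here indexed by `Fin n`, node `0` being the root): node `0` has
no parent and the parent of node `i > 0` is node `i−1`.  `cond i b` is
`P(X_i = 1 | X_{i−1} = b)` (for the root both values coincide and give its
unconditional mean).  The joint distribution is the product of the conditionals,
and the BN-induced Fourier basis is `φ_i(x) = (x_i − μ_{i,x_{i−1}})/σ_{i,x_{i−1}}`,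
`φ_S = ∏_{i∈S} φ_i`, with spectral norm `L1(f) = Σ_S |f̂_S|`.
-/

open Finset

noncomputable section

/-- Interpret a Boolean as a real number (`true ↦ 1`, `false ↦ 0`). -/
def b2r (b : Bool) : ℝ := if b then 1 else 0

/-- A chain Bayesian network distribution on `{0,1}^n`. -/
structure ChainBN (n : ℕ) where
  /-- `cond i b = P(X_i = 1 | X_{i-1} = b)`; for the root `i = 0` it is its mean. -/
  cond : Fin n → Bool → ℝ
  cond_pos : ∀ i b, 0 < cond i b
  cond_lt_one : ∀ i b, cond i b < 1
  /-- the root has no parent, so its "conditional" is constant -/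
  root_const : ∀ (h : 0 < n) (b b' : Bool), cond ⟨0, h⟩ b = cond ⟨0, h⟩ b'

namespace ChainBN

variable {n : ℕ}

/-- The value of the parent of node `i` under assignment `x` (root: dummy value). -/
def parentVal (x : Fin n → Bool) (i : Fin n) : Bool :=
  if (i : ℕ) = 0 then false
  else x ⟨(i : ℕ) - 1, Nat.lt_of_le_of_lt (Nat.sub_le _ _) i.isLt⟩

/-- The joint probability mass function of the chain. -/
def prob (B : ChainBN n) (x : Fin n → Bool) : ℝ :=
  ∏ i, if x i then B.cond i (parentVal x i) else 1 - B.cond i (parentVal x i)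

/-- Conditional standard deviation `σ_{i,b} = √(μ_{i,b}(1−μ_{i,b}))`. -/
def sigma (B : ChainBN n) (i : Fin n) (b : Bool) : ℝ :=
  Real.sqrt (B.cond i b * (1 - B.cond i b))

/-- BN-induced basis function of a single node. -/
def phi (B : ChainBN n) (i : Fin n) (x : Fin n → Bool) : ℝ :=
  (b2r (x i) - B.cond i (parentVal x i)) / B.sigma i (parentVal x i)

/-- BN-induced basis function `φ_S = ∏_{i ∈ S} φ_i` (with `φ_∅ ≡ 1`). -/
def phiS (B : ChainBN n) (S : Finset (Fin n)) (x : Fin n → Bool) : ℝ :=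
  ∏ i ∈ S, B.phi i x

/-- Expectation with respect to the chain distribution. -/
def expect (B : ChainBN n) (g : (Fin n → Bool) → ℝ) : ℝ :=
  ∑ x, B.prob x * g x

/-- Fourier coefficient `f̂_S = E_D[f(X) φ_S(X)]`. -/
def coeff (B : ChainBN n) (f : (Fin n → Bool) → ℝ) (S : Finset (Fin n)) : ℝ :=
  B.expect fun x => f x * B.phiS S x

/-- Spectral norm `L1(f) = Σ_S |f̂_S|`. -/
def L1 (B : ChainBN n) (f : (Fin n → Bool) → ℝ) : ℝ :=
  ∑ S : Finset (Fin n), |B.coeff f S|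

end ChainBN

/-- The conjunction `∏_{i∈T1} x_i · ∏_{j∈T0} (1−x_j)` on `{0,1}^n`. -/
def conj {n : ℕ} (T0 T1 : Finset (Fin n)) (x : Fin n → Bool) : ℝ :=
  (∏ i ∈ T1, b2r (x i)) * ∏ j ∈ T0, (1 - b2r (x j))

section Aux

variable {n : ℕ}

/-- Flip coordinate `k`. -/
def flipAt (k : Fin n) (x : Fin n → Bool) : Fin n → Bool :=
  fun j => if j = k then !(x j) else x j

lemma flipAt_invol (k : Fin n) : Function.Involutive (flipAt k) := by
  intro x; funext j; by_cases h : j = k <;> simp [flipAt, h]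

lemma flipAt_ne (k : Fin n) (x : Fin n → Bool) {j : Fin n} (h : j ≠ k) :
    flipAt k x j = x j := by simp [flipAt, h]

lemma flipAt_self (k : Fin n) (x : Fin n → Bool) : flipAt k x k = !(x k) := by
  simp [flipAt]

lemma parentVal_flipAt (k i : Fin n) (x : Fin n → Bool) (h : (i : ℕ) ≤ (k : ℕ)) :
    ChainBN.parentVal (flipAt k x) i = ChainBN.parentVal x i := by
  unfold ChainBN.parentVal
  by_cases h0 : (i : ℕ) = 0
  · simp [h0]
  · rw [if_neg h0, if_neg h0]
    apply flipAt_ne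
    intro he
    have : (i : ℕ) - 1 = (k : ℕ) := congrArg Fin.val he
    omega

/-- The conditional factor of the joint probability at node `i`. -/
def fac (B : ChainBN n) (i : Fin n) (x : Fin n → Bool) : ℝ :=
  if x i then B.cond i (ChainBN.parentVal x i) else 1 - B.cond i (ChainBN.parentVal x i)

lemma fac_flipAt (B : ChainBN n) {k i : Fin n} (x : Fin n → Bool) (h : (i : ℕ) < (k : ℕ)) :
    fac B i (flipAt k x) = fac B i x := by
  unfold fac
  rw [flipAt_ne k x (Fin.ne_of_val_ne (Nat.ne_of_lt h)), parentVal_flipAt k i x h.le]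

lemma phi_flipAt (B : ChainBN n) {k i : Fin n} (x : Fin n → Bool) (h : (i : ℕ) < (k : ℕ)) :
    B.phi i (flipAt k x) = B.phi i x := by
  unfold ChainBN.phi
  rw [flipAt_ne k x (Fin.ne_of_val_ne (Nat.ne_of_lt h)), parentVal_flipAt k i x h.le]

lemma fac_add (B : ChainBN n) (k : Fin n) (x : Fin n → Bool) :
    fac B k x + fac B k (flipAt k x) = 1 := by
  unfold fac
  rw [flipAt_self, parentVal_flipAt k k x le_rfl]
  cases x k <;> simp

lemma fac_phi_key (B : ChainBN n) (k : Fin n) (x : Fin n → Bool) :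
    fac B k x * B.phi k x + fac B k (flipAt k x) * B.phi k (flipAt k x) = 0 := by
  unfold fac ChainBN.phi
  rw [flipAt_self, parentVal_flipAt k k x le_rfl]
  cases x k <;> simp [b2r] <;> ring

lemma conj_flipAt (T0 T1 : Finset (Fin n)) (k : Fin n) (x : Fin n → Bool)
    (h : ∀ t ∈ T0 ∪ T1, t ≠ k) :
    conj T0 T1 (flipAt k x) = conj T0 T1 x := by
  unfold conj
  congr 1
  · exact Finset.prod_congr rfl fun t ht =>
      congrArg b2r (flipAt_ne k x (h t (Finset.mem_union_right _ ht)))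
  · exact Finset.prod_congr rfl fun t ht => by
      rw [flipAt_ne k x (h t (Finset.mem_union_left _ ht))]

lemma two_mul_sum_flip (k : Fin n) (F : (Fin n → Bool) → ℝ) :
    (2 : ℝ) * ∑ x, F x = ∑ x, (F x + F (flipAt k x)) := by
  rw [Finset.sum_add_distrib, two_mul]
  congr 1
  exact (Equiv.sum_comp ((flipAt_invol k).toPerm _) F).symm

lemma sum_eq_zero_of_flip (k : Fin n) (F : (Fin n → Bool) → ℝ)
    (h : ∀ x, F x + F (flipAt k x) = 0) : ∑ x, F x = 0 := by
  have h2 := two_mul_sum_flip k F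
  rw [Finset.sum_congr rfl fun x _ => h x, Finset.sum_const, smul_zero] at h2
  linarith

end Aux

/-- For a chain BN and a conjunction with literal set `T = T0 ∪ T1`,
any subset `S` with `max S > max T` has Fourier coefficient `f̂_S = 0`. -/
theorem chain_coeff_zero_beyond_max {n : ℕ} (B : ChainBN n)
    (T0 T1 : Finset (Fin n)) (hdisj : Disjoint T0 T1)
    (S : Finset (Fin n)) (hmax : ∃ s ∈ S, ∀ t ∈ T0 ∪ T1, t < s) :
    B.coeff (conj T0 T1) S = 0 := by
  obtain ⟨s, hs, hst⟩ := hmax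
  have hSne : S.Nonempty := ⟨s, hs⟩
  set m := S.max' hSne with hm
  have hmS : m ∈ S := S.max'_mem hSne
  have hTm : ∀ t ∈ T0 ∪ T1, (t : ℕ) < (m : ℕ) := fun t ht =>
    lt_of_lt_of_le (hst t ht) (S.le_max' s hs)
  have hSle : ∀ i ∈ S, (i : ℕ) ≤ (m : ℕ) := fun i hi => S.le_max' i hi
  -- main induction: summing the first k conditional factors against the integrand gives 0
  have main : ∀ k : ℕ, (m : ℕ) + 1 ≤ k →
      (∑ x : Fin n → Bool,
        (∏ i ∈ Finset.univ.filter (fun i : Fin n => (i : ℕ) < k), fac B i x) *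
          (conj T0 T1 x * B.phiS S x)) = 0 := by
    intro k hk
    induction k, hk using Nat.le_induction with
    | base =>
      have hnotmem : m ∉ Finset.univ.filter (fun i : Fin n => (i : ℕ) < (m : ℕ)) := by simp
      have hfil : Finset.univ.filter (fun i : Fin n => (i : ℕ) < (m : ℕ) + 1) =
          insert m (Finset.univ.filter (fun i : Fin n => (i : ℕ) < (m : ℕ))) := by
        ext i; simp [Fin.ext_iff]; omega
      have hsplit : ∀ y : Fin n → Bool,
          B.phiS S y = B.phi m y * ∏ i ∈ S.erase m, B.phi i y := fun y =>
        (Finset.mul_prod_erase S _ hmS).symm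
      simp only [hfil, Finset.prod_insert hnotmem]
      apply sum_eq_zero_of_flip m
      intro x
      have hP : (∏ i ∈ Finset.univ.filter (fun i : Fin n => (i : ℕ) < (m : ℕ)),
          fac B i (flipAt m x)) =
          ∏ i ∈ Finset.univ.filter (fun i : Fin n => (i : ℕ) < (m : ℕ)), fac B i x :=
        Finset.prod_congr rfl fun i hi => fac_flipAt B x (by simpa using hi)
      have hconj : conj T0 T1 (flipAt m x) = conj T0 T1 x :=
        conj_flipAt T0 T1 m x fun t ht => Fin.ne_of_val_ne (Nat.ne_of_lt (hTm t ht))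
      have hR : (∏ i ∈ S.erase m, B.phi i (flipAt m x)) = ∏ i ∈ S.erase m, B.phi i x := by
        refine Finset.prod_congr rfl fun i hi => phi_flipAt B x ?_
        obtain ⟨hne, hiS⟩ := Finset.mem_erase.mp hi
        have := hSle i hiS
        have : (i : ℕ) ≠ (m : ℕ) := fun h => hne (Fin.ext h)
        omega
      rw [hsplit x, hsplit (flipAt m x), hP, hconj, hR]
      linear_combination
        ((∏ i ∈ Finset.univ.filter (fun i : Fin n => (i : ℕ) < (m : ℕ)), fac B i x) *
          conj T0 T1 x * ∏ i ∈ S.erase m, B.phi i x) * fac_phi_key B m x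
    | succ k hk ih =>
      by_cases hkn : k < n
      · set kk : Fin n := ⟨k, hkn⟩ with hkk
        have hnotmem : kk ∉ Finset.univ.filter (fun i : Fin n => (i : ℕ) < k) := by
          simp [hkk]
        have hfil : Finset.univ.filter (fun i : Fin n => (i : ℕ) < k + 1) =
            insert kk (Finset.univ.filter (fun i : Fin n => (i : ℕ) < k)) := by
          ext i; simp [Fin.ext_iff, hkk]; omega
        simp only [hfil, Finset.prod_insert hnotmem]
        set F : (Fin n → Bool) → ℝ := fun x =>
          fac B kk x * (∏ i ∈ Finset.univ.filter (fun i : Fin n => (i : ℕ) < k), fac B i x) *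
            (conj T0 T1 x * B.phiS S x) with hF
        have hpt : ∀ x, F x + F (flipAt kk x) =
            (∏ i ∈ Finset.univ.filter (fun i : Fin n => (i : ℕ) < k), fac B i x) *
              (conj T0 T1 x * B.phiS S x) := by
          intro x
          have hP : (∏ i ∈ Finset.univ.filter (fun i : Fin n => (i : ℕ) < k),
              fac B i (flipAt kk x)) =
              ∏ i ∈ Finset.univ.filter (fun i : Fin n => (i : ℕ) < k), fac B i x :=
            Finset.prod_congr rfl fun i hi => fac_flipAt B x (by simpa [hkk] using hi)
          have hconj : conj T0 T1 (flipAt kk x) = conj T0 T1 x :=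
            conj_flipAt T0 T1 kk x fun t ht =>
              Fin.ne_of_val_ne (by have := hTm t ht; simp only [hkk]; omega)
          have hphiS : B.phiS S (flipAt kk x) = B.phiS S x := by
            refine Finset.prod_congr rfl fun i hi => phi_flipAt B x ?_
            have := hSle i hi; simp only [hkk]; omega
          simp only [hF, hP, hconj, hphiS]
          linear_combination
            ((∏ i ∈ Finset.univ.filter (fun i : Fin n => (i : ℕ) < k), fac B i x) *
              (conj T0 T1 x * B.phiS S x)) * fac_add B kk x
        have h2 := two_mul_sum_flip kk F
        rw [Finset.sum_congr rfl fun x _ => hpt x, ih] at h2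
        have : ∑ x, F x = 0 := by linarith
        simpa [hF, mul_assoc] using this
      · have hfil : Finset.univ.filter (fun i : Fin n => (i : ℕ) < k + 1) =
            Finset.univ.filter (fun i : Fin n => (i : ℕ) < k) := by
          ext i; simp; have := i.isLt; omega
        rw [hfil]; exact ih
  have hfin : Finset.univ.filter (fun i : Fin n => (i : ℕ) < n) = Finset.univ :=
    Finset.filter_true_of_mem fun i _ => i.isLt
  have hco : B.coeff (conj T0 T1) S =
      ∑ x : Fin n → Bool,
        (∏ i ∈ Finset.univ.filter (fun i : Fin n => (i : ℕ) < n), fac B i x) *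
          (conj T0 T1 x * B.phiS S x) := by
    rw [hfin]
    rfl
  rw [hco]
  exact main n (by have := m.isLt; omega)
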